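/- Let V be a finite-dimensional vector space, let V₁, V₂, V₃ ∈ V be linearly independent, and let E = span{V₁, V₂, V₃}. Suppose β : V × V → V is a bilinear alternating map with β(V₁,V₂) = V₃ and β(V₂,V₃) ∉ E. If v = aV₁ + bV₂ + cV₃ satisfies β(Vᵢ, v) ∈ E for i = 1,2,3, then c = 0. -/
import Mathlib


/-- Pointwise algebraic content of "the kernel line field is contained in `D`":
let `V₁, V₂, V₃` be linearly independent vectors spanning `E`, and `β` a bilinear
alternating map with `β(V₁,V₂) = V₃` and `β(V₂,V₃) ∉ E`. If `v = aV₁ + bV₂ + cV₃`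
satisfies `β(Vᵢ, v) ∈ E` for `i = 1,2,3`, then `c = 0`. -/
theorem kernel_contained_in_engel_distribution
    (V : Type*) [AddCommGroup V] [Module ℂ V] [FiniteDimensional ℂ V]
    (V₁ V₂ V₃ : V)
    (hind : LinearIndependent ℂ ![V₁, V₂, V₃])
    (E : Submodule ℂ V) (hE : E = Submodule.span ℂ {V₁, V₂, V₃})
    (β : V →ₗ[ℂ] V →ₗ[ℂ] V)
    (halt : ∀ v : V, β v v = 0)
    (h12 : β V₁ V₂ = V₃)
    (h23 : β V₂ V₃ ∉ E)
    (a b c : ℂ)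
    (h1 : β V₁ (a • V₁ + b • V₂ + c • V₃) ∈ E)
    (h2 : β V₂ (a • V₁ + b • V₂ + c • V₃) ∈ E)
    (h3 : β V₃ (a • V₁ + b • V₂ + c • V₃) ∈ E) :
    c = 0 := by
  by_contra hc
  have h21 : β V₂ V₁ = -V₃ := by
    have := halt (V₁ + V₂)
    simp only [map_add, LinearMap.add_apply, halt] at this
    rw [h12] at this
    linear_combination (norm := module) this
  have hexp : β V₂ (a • V₁ + b • V₂ + c • V₃)
      = a • (-V₃) + c • β V₂ V₃ := by
    simp [map_add, map_smul, halt, h21]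
  rw [hexp] at h2
  have hV3 : V₃ ∈ E := by
    rw [hE]; exact Submodule.subset_span (by simp)
  have : c • β V₂ V₃ ∈ E := by
    have := E.sub_mem h2 (E.smul_mem a (E.neg_mem hV3))
    simpa using this
  exact h23 ((E.smul_mem_iff hc).mp this)
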